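/- arXiv:2507.16762 — 2 statements merged into one kernel-verified Lean document; each statement's English description precedes it below -/
import Mathlib

section
/- A measure space (Ω, 𝒜, μ) satisfies inf{μ(A) : A ∈ 𝒜, μ(A) > 0} = 0 if and only if there exists a countable family of mutually disjoint measurable sets (A_n) with μ(A_n) > 0 for all n and lim_{n→∞} μ(A_n) = 0. -/
open MeasureTheory Set Filter

/-- A measure space satisfies `inf {μ A : μ A > 0} = 0` iff there is a countable family
of mutually disjoint measurable sets of positive measure whose measures tend to `0`. -/
theorem sInf_pos_measure_eq_zero_iff
    {Ω : Type*} [MeasurableSpace Ω] (μ : Measure Ω) :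
    sInf {m : ENNReal | ∃ A : Set Ω, MeasurableSet A ∧ 0 < μ A ∧ μ A = m} = 0 ↔
      ∃ A : ℕ → Set Ω, (∀ n, MeasurableSet (A n)) ∧ (∀ n, 0 < μ (A n)) ∧
        Pairwise (Function.onFun Disjoint A) ∧
        Tendsto (fun n => μ (A n)) atTop (nhds 0) := by
  constructor
  · intro h
    rw [← ENNReal.bot_eq_zero, sInf_eq_bot] at h
    -- key: sets of arbitrarily small positive measure exist
    have key : ∀ c : ENNReal, 0 < c → ∃ B : Set Ω, MeasurableSet B ∧ 0 < μ B ∧ μ B < c := by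
      intro c hc
      obtain ⟨m, ⟨B, hB, hBpos, hBm⟩, hmc⟩ := h c hc
      exact ⟨B, hB, hBpos, hBm ▸ hmc⟩
    choose! F hFmeas hFpos hFlt using key
    -- recursive sequence
    set B : ℕ → Set Ω := fun n => Nat.rec (F 1) (fun _ prev => F (μ prev / 4)) n with hB
    have hB0 : B 0 = F 1 := rfl
    have hBsucc : ∀ n, B (n + 1) = F (μ (B n) / 4) := fun n => rfl
    have hpos : ∀ n, 0 < μ (B n) := by
      intro n
      induction n with
      | zero => exact hFpos 1 one_pos
      | succ n ih =>
        rw [hBsucc]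
        exact hFpos _ (ENNReal.div_pos ih.ne' (by norm_num))
    have hmeas : ∀ n, MeasurableSet (B n) := by
      intro n
      cases n with
      | zero => exact hFmeas 1 one_pos
      | succ n =>
        rw [hBsucc]
        exact hFmeas _ (ENNReal.div_pos (hpos n).ne' (by norm_num))
    have hstep : ∀ n, μ (B (n + 1)) < μ (B n) / 4 := by
      intro n
      rw [hBsucc]
      exact hFlt _ (ENNReal.div_pos (hpos n).ne' (by norm_num))
    have hB0lt : μ (B 0) < 1 := hFlt 1 one_pos
    have hgeom : ∀ n, μ (B n) < 4⁻¹ ^ n := by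
      intro n
      induction n with
      | zero => simpa using hB0lt
      | succ n ih =>
        calc μ (B (n + 1)) < μ (B n) / 4 := hstep n
        _ ≤ 4⁻¹ ^ n / 4 := by gcongr
        _ = 4⁻¹ ^ (n + 1) := by
            rw [pow_succ, ENNReal.div_eq_inv_mul, mul_comm]
    have hfin : ∀ n, μ (B n) ≠ ⊤ := fun n => ((hgeom n).trans_le le_top).ne
    -- tail bound
    have htail : ∀ n k, μ (B (n + 1 + k)) ≤ 4⁻¹ ^ (k + 1) * μ (B n) := by
      intro n k
      induction k with
      | zero =>
        have := (hstep n).le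
        simpa [ENNReal.div_eq_inv_mul, pow_one] using this
      | succ k ih =>
        have h1 : μ (B (n + 1 + (k + 1))) ≤ μ (B (n + 1 + k)) / 4 := by
          have := (hstep (n + 1 + k)).le
          have heq : n + 1 + (k + 1) = n + 1 + k + 1 := by omega
          rw [heq]
          exact this
        calc μ (B (n + 1 + (k + 1))) ≤ μ (B (n + 1 + k)) / 4 := h1
        _ ≤ (4⁻¹ ^ (k + 1) * μ (B n)) / 4 := by gcongr
        _ = 4⁻¹ ^ (k + 2) * μ (B n) := by
            rw [ENNReal.div_eq_inv_mul, ← mul_assoc, ← pow_succ']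
    -- sum of tail coefficients is < 1
    have hcoef : (∑' k : ℕ, (4⁻¹ : ENNReal) ^ (k + 1)) < 1 := by
      have h1 : ∀ k : ℕ, (4⁻¹ : ENNReal) ^ (k + 1) ≤ 4⁻¹ * 2⁻¹ ^ k := by
        intro k
        rw [pow_succ']
        exact mul_le_mul' (ENNReal.inv_le_inv.2 (by norm_num))
          (pow_le_pow_left' (ENNReal.inv_le_inv.2 (by norm_num)) k)
      calc (∑' k : ℕ, (4⁻¹ : ENNReal) ^ (k + 1)) ≤ ∑' k : ℕ, 4⁻¹ * 2⁻¹ ^ k :=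
            ENNReal.tsum_le_tsum h1
      _ = 4⁻¹ * (1 - 2⁻¹)⁻¹ := by rw [ENNReal.tsum_mul_left, ENNReal.tsum_geometric]
      _ = 4⁻¹ * 2 := by rw [ENNReal.one_sub_inv_two, inv_inv]
      _ < 1 := by
          rw [show (4 : ENNReal)⁻¹ * 2 = 2⁻¹ by
            rw [show (4 : ENNReal) = 2 * 2 by norm_num,
              ENNReal.mul_inv (by norm_num) (by norm_num), mul_assoc,
              ENNReal.inv_mul_cancel (by norm_num) (by norm_num), mul_one]]
          exact ENNReal.inv_lt_one.2 ENNReal.one_lt_two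
    -- define the disjoint family
    set A : ℕ → Set Ω := fun n => B n \ ⋃ k, B (n + 1 + k) with hA
    have hAmeas : ∀ n, MeasurableSet (A n) :=
      fun n => (hmeas n).diff (MeasurableSet.iUnion fun k => hmeas _)
    have hU : ∀ n, μ (⋃ k, B (n + 1 + k)) < μ (B n) := by
      intro n
      calc μ (⋃ k, B (n + 1 + k)) ≤ ∑' k, μ (B (n + 1 + k)) := measure_iUnion_le _
      _ ≤ ∑' k, (4⁻¹ : ENNReal) ^ (k + 1) * μ (B n) := ENNReal.tsum_le_tsum (htail n)
      _ = (∑' k, (4⁻¹ : ENNReal) ^ (k + 1)) * μ (B n) := ENNReal.tsum_mul_right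
      _ < 1 * μ (B n) := by
          refine ENNReal.mul_lt_mul_left (hpos n).ne' (hfin n) ?_
          exact hcoef
      _ = μ (B n) := one_mul _
    have hApos : ∀ n, 0 < μ (A n) := by
      intro n
      rw [pos_iff_ne_zero]
      intro hz
      have hcover : B n ⊆ A n ∪ ⋃ k, B (n + 1 + k) := fun x hx => by
        by_cases hxu : x ∈ ⋃ k, B (n + 1 + k)
        · exact Or.inr hxu
        · exact Or.inl ⟨hx, hxu⟩
      have : μ (B n) ≤ μ (A n) + μ (⋃ k, B (n + 1 + k)) :=
        (measure_mono hcover).trans (measure_union_le _ _)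
      rw [hz, zero_add] at this
      exact absurd this (hU n).not_ge
    have hAdisj : Pairwise (Function.onFun Disjoint A) := by
      have key : ∀ m n, m < n → Disjoint (A m) (A n) := by
        intro m n hmn
        have hsub : A n ⊆ ⋃ k, B (m + 1 + k) := fun x hx => by
          have hxB : x ∈ B n := hx.1
          exact mem_iUnion.2 ⟨n - m - 1, by
            have : m + 1 + (n - m - 1) = n := by omega
            rwa [this]⟩
        exact (disjoint_sdiff_left.mono_right hsub).symm.symm
      intro m n hmn
      rcases hmn.lt_or_gt with h | h
      · exact key m n h
      · exact (key n m h).symm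
    refine ⟨A, hAmeas, hApos, hAdisj, ?_⟩
    have hle : ∀ n, μ (A n) ≤ 4⁻¹ ^ n := fun n =>
      (measure_mono diff_subset).trans (hgeom n).le
    exact tendsto_of_tendsto_of_tendsto_of_le_of_le tendsto_const_nhds
      (ENNReal.tendsto_pow_atTop_nhds_zero_of_lt_one
        (ENNReal.inv_lt_one.2 (by norm_num))) (fun n => zero_le) hle
  · rintro ⟨A, hmeas, hpos, -, htend⟩
    rw [← ENNReal.bot_eq_zero, sInf_eq_bot]
    intro b hb
    have : ∀ᶠ n in atTop, μ (A n) < b := (tendsto_order.1 htend).2 b hb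
    obtain ⟨n, hn⟩ := this.exists
    exact ⟨μ (A n), ⟨A n, hmeas n, hpos n, rfl⟩, hn⟩
end

section
/- Let X be a metrizable separable topological vector space over ℝ, α an infinite cardinal, and A, B ⊆ X with A + B ⊆ A, A ∩ B = ∅, A α-lineable (there is a subspace V of dimension α with V ∖ {0} ⊆ A), and B dense-lineable (there is a dense subspace W with W ∖ {0} ⊆ B). Then A is α-dense-lineable: there is a dense subspace U of dimension α with U ∖ {0} ⊆ A. -/
open Filter Set Pointwise
open scoped Topology

/-- Transfer of dense lineability: in a metrizable separable topological vector space,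
if `A + B ⊆ A`, `A ∩ B = ∅`, `A` is `α`-lineable and `B` is dense-lineable, then `A`
is `α`-dense-lineable. -/
theorem alpha_dense_lineable_of_lineable
    {X : Type*} [AddCommGroup X] [Module ℝ X] [TopologicalSpace X]
    [IsTopologicalAddGroup X] [ContinuousSMul ℝ X]
    [TopologicalSpace.MetrizableSpace X] [TopologicalSpace.SeparableSpace X]
    (α : Cardinal) (hα : Cardinal.aleph0 ≤ α)
    (A B : Set X)
    (hAB : A + B ⊆ A)
    (hdisj : A ∩ B = ∅)
    (hAlin : ∃ V : Submodule ℝ X, Module.rank ℝ V = α ∧ (V : Set X) \ {0} ⊆ A)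
    (hBlin : ∃ W : Submodule ℝ X, Dense (W : Set X) ∧ (W : Set X) \ {0} ⊆ B) :
    ∃ U : Submodule ℝ X, Dense (U : Set X) ∧ Module.rank ℝ U = α ∧
      (U : Set X) \ {0} ⊆ A := by
  classical
  obtain ⟨V, hVrank, hVA⟩ := hAlin
  obtain ⟨W, hWdense, hWB⟩ := hBlin
  letI : MetricSpace X := TopologicalSpace.metrizableSpaceMetric X
  haveI : SecondCountableTopology X :=
    UniformSpace.secondCountable_of_separable X
  -- countable dense subset of W
  obtain ⟨c, hcW, hccount, hcdense⟩ := hWdense.exists_countable_dense_subset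
  have hcne : c.Nonempty := hcdense.nonempty
  obtain ⟨e0, he0⟩ := Set.Countable.exists_eq_range hccount hcne
  have he0W : ∀ n, e0 n ∈ W := fun n => hcW (he0 ▸ Set.mem_range_self n)
  have he0d : DenseRange e0 := by rw [DenseRange, ← he0]; exact hcdense
  -- the sequence `e`, hitting each point of `c` infinitely often
  set e : ℕ → X := fun n => e0 (Nat.unpair n).1 with he_def
  have heW : ∀ n, e n ∈ W := fun n => he0W _
  -- basis of V
  set b := Module.Basis.ofVectorSpace ℝ V with hb
  set ι := Module.Basis.ofVectorSpaceIndex ℝ V with hι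
  set v : ι → X := fun i => (b i : X) with hv_def
  have hv : LinearIndependent ℝ v :=
    b.linearIndependent.map' V.subtype V.ker_subtype
  have hvV : ∀ i, v i ∈ V := fun i => (b i).2
  have hmkι : Cardinal.mk ι = α := by rw [b.mk_eq_rank'', hVrank]
  haveI : Infinite ι := Cardinal.infinite_iff.mpr (hmkι ▸ hα)
  set f : ℕ ↪ ι := Infinite.natEmbedding ι with hf
  -- choose small perturbation scalars
  have hex : ∀ n : ℕ, ∃ t : ℝ, t ≠ 0 ∧
      dist (t • v (f n) + e n) (e n) < 1 / (n + 1) := by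
    intro n
    have hcont : Filter.Tendsto (fun t : ℝ => t • v (f n) + e n) (𝓝[≠] 0)
        (𝓝 (e n)) := by
      have h1 : Continuous fun t : ℝ => t • v (f n) + e n :=
        (continuous_id.smul continuous_const).add continuous_const
      have h2 := h1.tendsto 0
      rw [show (0:ℝ) • v (f n) + e n = e n by simp] at h2
      exact h2.mono_left nhdsWithin_le_nhds
    have hball : ∀ᶠ t in 𝓝[≠] (0:ℝ),
        dist (t • v (f n) + e n) (e n) < 1 / (n + 1) := by
      have := hcont (Metric.ball_mem_nhds (e n) (show (0:ℝ) < 1 / (n + 1) by positivity))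
      exact this
    obtain ⟨t, ht1, ht2⟩ := (hball.and self_mem_nhdsWithin).exists
    exact ⟨t, ht2, ht1⟩
  choose ε hε0 hεd using hex
  -- invert f
  have hfinj : Function.Injective f := f.injective
  have hinv : ∀ n, Function.invFun f (f n) = n := fun n =>
    Function.leftInverse_invFun hfinj n
  -- the generating family
  set σ : ι → ℝ := fun i =>
    if ∃ n, f n = i then ε (Function.invFun f i) else 1 with hσ_def
  set w : ι → X := fun i =>
    if ∃ n, f n = i then e (Function.invFun f i) else 0 with hw_def
  set g : ι → X := fun i => σ i • v i + w i with hg_def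
  have hσ0 : ∀ i, σ i ≠ 0 := by
    intro i
    by_cases h : ∃ n, f n = i
    · simp only [hσ_def, if_pos h]; exact hε0 _
    · simp only [hσ_def, if_neg h]; exact one_ne_zero
  have hwW : ∀ i, w i ∈ W := by
    intro i
    by_cases h : ∃ n, f n = i
    · simp only [hw_def, if_pos h]; exact heW _
    · simp only [hw_def, if_neg h]; exact W.zero_mem
  have hgfn : ∀ n, g (f n) = ε n • v (f n) + e n := by
    intro n
    have hmem : ∃ m, f m = f n := ⟨n, rfl⟩
    simp only [hg_def, hσ_def, hw_def, if_pos hmem, hinv n]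
  -- linear independence of the scaled family
  have hσv : LinearIndependent ℝ (fun i => σ i • v i) := by
    have := hv.units_smul (fun i => Units.mk0 (σ i) (hσ0 i))
    exact this
  -- decomposition of linear combinations
  set P : (ι →₀ ℝ) → X := fun l => l.sum fun i a => a • (σ i • v i) with hP_def
  set Q : (ι →₀ ℝ) → X := fun l => l.sum fun i a => a • w i with hQ_def
  have hPV : ∀ l, P l ∈ V := fun l =>
    Submodule.sum_mem V fun i _ => V.smul_mem _ (V.smul_mem _ (hvV i))
  have hQW : ∀ l, Q l ∈ W := fun l =>
    Submodule.sum_mem W fun i _ => W.smul_mem _ (hwW i)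
  have hsplit : ∀ l : ι →₀ ℝ, Finsupp.linearCombination ℝ g l = P l + Q l := by
    intro l
    rw [Finsupp.linearCombination_apply, hP_def, hQ_def, ← Finsupp.sum_add]
    congr 1
    funext i a
    simp [hg_def, smul_add]
  have hP0 : ∀ l : ι →₀ ℝ, P l = 0 → l = 0 := by
    intro l hl
    have : Finsupp.linearCombination ℝ (fun i => σ i • v i) l = 0 := by
      rw [Finsupp.linearCombination_apply]; exact hl
    exact linearIndependent_iff.mp hσv l this
  -- main claim
  have main : ∀ l : ι →₀ ℝ, l ≠ 0 →
      Finsupp.linearCombination ℝ g l ∈ A ∧ Finsupp.linearCombination ℝ g l ≠ 0 := by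
    intro l hl
    have hPne : P l ≠ 0 := fun h => hl (hP0 l h)
    have hPA : P l ∈ A := hVA ⟨hPV l, hPne⟩
    rw [hsplit l]
    by_cases hq : Q l = 0
    · rw [hq, add_zero]; exact ⟨hPA, hPne⟩
    · have hQB : Q l ∈ B := hWB ⟨hQW l, hq⟩
      refine ⟨hAB (Set.add_mem_add hPA hQB), ?_⟩
      intro h0
      have hQeq : Q l = -(P l) := eq_neg_of_add_eq_zero_right h0
      have hnegP : -(P l) ∈ A := hVA ⟨V.neg_mem (hPV l), neg_ne_zero.mpr hPne⟩
      have : Q l ∈ A ∩ B := ⟨hQeq ▸ hnegP, hQB⟩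
      rw [hdisj] at this
      exact this
  -- linear independence of g
  have hg : LinearIndependent ℝ g := by
    rw [linearIndependent_iff]
    intro l hl
    by_contra hne
    exact (main l hne).2 hl
  refine ⟨Submodule.span ℝ (Set.range g), ?_, ?_, ?_⟩
  · -- density
    rw [Metric.dense_iff]
    intro x r hr
    obtain ⟨m, hm⟩ := Metric.denseRange_iff.mp he0d x (r / 2) (by positivity)
    obtain ⟨k, hk⟩ := exists_nat_one_div_lt (show (0:ℝ) < r / 2 by positivity)
    set n := Nat.pair m k with hn
    have hen : e n = e0 m := by simp [he_def, hn, Nat.unpair_pair]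
    have hnk : k ≤ n := Nat.right_le_pair m k
    refine ⟨g (f n), ?_, Submodule.subset_span (Set.mem_range_self _)⟩
    rw [Metric.mem_ball]
    have h1 : dist (g (f n)) (e n) < 1 / (n + 1) := by
      rw [hgfn n]; exact hεd n
    have h2 : (1:ℝ) / (n + 1) ≤ 1 / (k + 1) := by
      apply one_div_le_one_div_of_le
      · positivity
      · exact_mod_cast by omega
    have h3 : dist (e n) x < r / 2 := by
      rw [hen, dist_comm]; exact hm
    calc dist (g (f n)) x ≤ dist (g (f n)) (e n) + dist (e n) x := dist_triangle _ _ _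
      _ < 1 / (k + 1) + r / 2 := by
          apply add_lt_add_of_le_of_lt (le_trans (le_of_lt h1) h2) h3
      _ < r / 2 + r / 2 := by linarith
      _ = r := by ring
  · -- rank
    rw [rank_span hg, Cardinal.mk_range_eq g hg.injective, hmkι]
  · -- membership in A
    rintro u ⟨hu, hu0⟩
    obtain ⟨l, hl⟩ := Finsupp.mem_span_range_iff_exists_finsupp.mp hu
    have hlC : Finsupp.linearCombination ℝ g l = u := by
      rw [Finsupp.linearCombination_apply]; exact hl
    have hlne : l ≠ 0 := by
      rintro rfl
      apply hu0
      rw [← hlC, map_zero]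
      exact Set.mem_singleton 0
    exact hlC ▸ (main l hlne).1
end
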